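/- arXiv:2411.04019 — 2 statements merged into one kernel-verified Lean document; each statement's English description precedes it below -/
import Mathlib

section
/- Under the bijection σ ↦ s^σ between S_n and lower exceeding sequences, a permutation h belongs to the stabilizer H_l of a monotone list l if and only if s^h ∈ LES_l, i.e., min{j : l_j = l_i} ≤ s^h_i ≤ max{j : l_j = l_i} for all i. -/
/-- Under the bijection `σ ↦ s^σ`, a permutation `h` stabilizes the monotone
list `l` iff `s^h ∈ LES_l`, i.e. `min{j : l j = l i} ≤ s^h_i ≤ max{j : l j = l i}`
for all `i` (values 1-indexed). -/
theorem stabilizer_iff_LESl (n : ℕ) (l : Fin n → ℤ) (hl : Monotone l)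
    (a b : Fin n → Fin n)
    (ha : ∀ i, IsLeast {j | l j = l i} (a i))
    (hb : ∀ i, IsGreatest {j | l j = l i} (b i))
    (h : Equiv.Perm (Fin n)) :
    (∀ i, l (h⁻¹ i) = l i) ↔
      (∀ i : Fin n,
        (a i).1 + 1 ≤ (Finset.univ.filter fun j => h⁻¹ j ≤ h⁻¹ i ∧ j ≤ i).card ∧
        (Finset.univ.filter fun j => h⁻¹ j ≤ h⁻¹ i ∧ j ≤ i).card ≤ (b i).1 + 1) := by
  have hinj : Function.Injective (fun j => h⁻¹ j : Fin n → Fin n) :=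
    (h⁻¹ : Equiv.Perm (Fin n)).injective
  constructor
  · intro H i
    have hai : a i ≤ i := (ha i).2 rfl
    have hbi' : h⁻¹ i ≤ b i := (hb i).2 (H i)
    constructor
    · -- lower bound
      have hsub : insert i (Finset.Iio (a i)) ⊆
          Finset.univ.filter fun j => h⁻¹ j ≤ h⁻¹ i ∧ j ≤ i := by
        intro j hj
        simp only [Finset.mem_insert, Finset.mem_Iio] at hj
        simp only [Finset.mem_filter, Finset.mem_univ, true_and]
        rcases hj with rfl | hj
        · exact ⟨le_rfl, le_rfl⟩
        · have hji : j < i := lt_of_lt_of_le hj hai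
          have hlj : l j < l i := by
            rcases lt_or_eq_of_le (hl hji.le) with h1 | h1
            · exact h1
            · exact absurd ((ha i).2 h1) (not_le.mpr hj)
          have hlt : l (h⁻¹ j) < l (h⁻¹ i) := by rw [H j, H i]; exact hlj
          exact ⟨(hl.reflect_lt hlt).le, hji.le⟩
      have hcard := Finset.card_le_card hsub
      rw [Finset.card_insert_of_notMem (by simp [hai.not_gt]),
        Fin.card_Iio] at hcard
      omega
    · -- upper bound
      have := Finset.card_le_card_of_injOn
        (f := fun j => h⁻¹ j) (s := Finset.univ.filter fun j => h⁻¹ j ≤ h⁻¹ i ∧ j ≤ i)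
        (t := Finset.Iic (b i))
        (fun j hj => by
          simp only [Finset.mem_coe, Finset.mem_filter] at hj
          exact Finset.mem_Iic.mpr (le_trans hj.2.1 hbi'))
        (fun x _ y _ hxy => hinj hxy)
      rwa [Fin.card_Iic] at this
  · intro H
    have step1 : ∀ i, a i ≤ h⁻¹ i := by
      intro i
      have h2 := (H i).1
      have h3 := Finset.card_le_card_of_injOn
        (f := fun j => h⁻¹ j) (s := Finset.univ.filter fun j => h⁻¹ j ≤ h⁻¹ i ∧ j ≤ i)
        (t := Finset.Iic (h⁻¹ i))
        (fun j hj => by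
          simp only [Finset.mem_coe, Finset.mem_filter] at hj
          exact Finset.mem_Iic.mpr hj.2.1)
        (fun x _ y _ hxy => hinj hxy)
      rw [Fin.card_Iic] at h3
      exact Fin.le_def.mpr (by omega)
    have step2 : ∀ i, h⁻¹ i ≤ b i := by
      intro i
      by_contra hc
      push_neg at hc
      have hJ : (Finset.Ioi (b i)).image (fun j => h⁻¹ j) = Finset.Ioi (b i) := by
        apply Finset.eq_of_subset_of_card_le
        · intro k hk
          obtain ⟨j, hj, rfl⟩ := Finset.mem_image.mp hk
          rw [Finset.mem_Ioi] at hj ⊢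
          have haj : b i < a j := by
            by_contra hle
            push_neg at hle
            have h1 : l j ≤ l i := by
              rw [← (ha j).1, ← (hb i).1]; exact hl hle
            have h2 : l i ≤ l j := by
              rw [← (hb i).1]; exact hl hj.le
            exact absurd ((hb i).2 (le_antisymm h1 h2)) (not_le.mpr hj)
          exact lt_of_lt_of_le haj (step1 j)
        · rw [Finset.card_image_of_injective _ hinj]
      have hmem : h⁻¹ i ∈ Finset.Ioi (b i) := Finset.mem_Ioi.mpr hc
      rw [← hJ] at hmem
      obtain ⟨j, hj, hji⟩ := Finset.mem_image.mp hmem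
      have hji' : j = i := hinj hji
      subst hji'
      exact absurd (Finset.mem_Ioi.mp hj) (not_lt.mpr ((hb j).2 rfl))
    intro i
    apply le_antisymm
    · calc l (h⁻¹ i) ≤ l (b i) := hl (step2 i)
        _ = l i := (hb i).1
    · calc l i = l (a i) := ((ha i).1).symm
        _ ≤ l (h⁻¹ i) := hl (step1 i)
end

section
/- The prefix-sum recursion is correct: applying log₂ n layers of the doubling subroutine D (where at layer i, for each block of length 2^i, every entry in the second half of the block is incremented by the value currently stored at the midpoint of the block) transforms an input array (d_1,...,d_n), with n a power of 2, into its array of prefix sums (d_1, d_1+d_2, ..., d_1+⋯+d_n). -/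
/-- One layer of the doubling prefix-sum subroutine `D` (0-indexed): in layer
`i`, every position `p` lying in the second half of its length-`2^i` block is
incremented by the value at the midpoint of the block. -/
def prefixLayer (i : ℕ) (d : ℕ → ℤ) : ℕ → ℤ := fun p =>
  if 2 ^ (i - 1) ≤ p % 2 ^ i then
    d p + d (p - p % 2 ^ i + 2 ^ (i - 1) - 1)
  else d p

lemma prefix_key (d : ℕ → ℤ) :
    ∀ i p, ((List.range i).foldl (fun acc j => prefixLayer (j + 1) acc) d) p
      = ∑ q ∈ Finset.Ico (p - p % 2 ^ i) (p + 1), d q := by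
  intro i
  induction i with
  | zero =>
    intro p
    simp [Nat.mod_one]
  | succ i ih =>
    intro p
    rw [List.range_succ, List.foldl_append, List.foldl_cons, List.foldl_nil]
    have hmle : p % 2 ^ (i + 1) ≤ p := Nat.mod_le _ _
    have hmlt : p % 2 ^ (i + 1) < 2 ^ (i + 1) := Nat.mod_lt _ (by positivity)
    have hmodmod : p % 2 ^ i = (p % 2 ^ (i + 1)) % 2 ^ i :=
      (Nat.mod_mod_of_dvd p (pow_dvd_pow 2 (Nat.le_succ i))).symm
    have hpow : (2 : ℕ) ^ (i + 1) = 2 ^ i + 2 ^ i := by ring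
    have hpos : 0 < (2 : ℕ) ^ i := by positivity
    simp only [prefixLayer, Nat.add_sub_cancel]
    by_cases h : 2 ^ i ≤ p % 2 ^ (i + 1)
    · rw [if_pos h]
      -- p % 2^i = p % 2^(i+1) - 2^i
      have hmod : p % 2 ^ i = p % 2 ^ (i + 1) - 2 ^ i := by
        rw [hmodmod, Nat.mod_eq_sub_mod h, Nat.mod_eq_of_lt (by omega)]
      set m := p % 2 ^ (i + 1) with hm
      have hdvd : 2 ^ (i + 1) ∣ p - m := by
        have := Nat.div_add_mod p (2 ^ (i + 1))
        exact ⟨p / 2 ^ (i + 1), by omega⟩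
      have hdvd' : 2 ^ i ∣ p - m := dvd_trans (pow_dvd_pow 2 (Nat.le_succ i)) hdvd
      obtain ⟨c, hc⟩ := hdvd'
      have hq0mod : (p - m + 2 ^ i - 1) % 2 ^ i = 2 ^ i - 1 := by
        have : p - m + 2 ^ i - 1 = 2 ^ i - 1 + 2 ^ i * c := by omega
        rw [this, Nat.add_mul_mod_self_left, Nat.mod_eq_of_lt (by omega)]
      rw [ih p, ih (p - m + 2 ^ i - 1), hq0mod, hmod]
      have h1 : p - m + 2 ^ i - 1 - (2 ^ i - 1) = p - m := by omega
      have h2 : p - m + 2 ^ i - 1 + 1 = p - (m - 2 ^ i) := by omega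
      rw [h1, h2, add_comm]
      exact Finset.sum_Ico_consecutive _ (by omega) (by omega)
    · rw [if_neg h]
      have hmod : p % 2 ^ i = p % 2 ^ (i + 1) := by
        rw [hmodmod, Nat.mod_eq_of_lt (by omega)]
      rw [ih p, hmod]

/-- Applying the `k` layers `D` (for block sizes `2^1, …, 2^k`) to an input
array of length `n = 2^k` produces its array of prefix sums. -/
theorem prefix_sum_correct (k : ℕ) (d : ℕ → ℤ) :
    ∀ p < 2 ^ k,
      ((List.range k).foldl (fun acc i => prefixLayer (i + 1) acc) d) p
        = ∑ q ∈ Finset.range (p + 1), d q := by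
  intro p hp
  rw [prefix_key, Nat.mod_eq_of_lt hp, Nat.sub_self, ← Finset.range_eq_Ico]
end
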